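/- (Theorem 1) The SDMMSA estimator (μ̂_1,…,μ̂_k) is the maximum likelihood estimator under the monotone constraint; equivalently, (μ̂_1,…,μ̂_k) belongs to the isotonic cone {(μ_1,…,μ_k) : μ_1 ≤ μ_2 ≤ … ≤ μ_k} and minimizes the weighted sum of squares f(μ_1,…,μ_k) = Σ_{i=1}^{k} n_i (Ȳ_i − μ_i)² over that cone. -/
import Mathlib


open Finset

noncomputable section SDMMSA

/-- Pooled weight `n_{i,j} = ∑_{h=i}^j n_h`. -/
def pooledWeight (n : ℕ → ℝ) (i j : ℕ) : ℝ := ∑ h ∈ Finset.Icc i j, n h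

/-- Pooled (weighted) mean `Ȳ_{i,j} = (∑_{h=i}^j n_h Y_h) / n_{i,j}`. -/
def pooledMean (n Y : ℕ → ℝ) (i j : ℕ) : ℝ :=
  (∑ h ∈ Finset.Icc i j, n h * Y h) / pooledWeight n i j

/-- The first SDMMSA index for the data `(Y_1,n_1),…,(Y_t,n_t)`:
the smallest `j ∈ [1,t]` at which `Ȳ_{j,t} = max_{1 ≤ j' ≤ t} Ȳ_{j',t}`. -/
def firstIdx (n Y : ℕ → ℝ) (t : ℕ) : ℕ :=
  sInf {j | 1 ≤ j ∧ j ≤ t ∧ ∀ j', 1 ≤ j' → j' ≤ t → pooledMean n Y j' t ≤ pooledMean n Y j t}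

/-- Fuel-based recursion implementing the SDMMSA step-down procedure: on data range `[1,t]`,
every `i ≥ i₁ = firstIdx n Y t` gets the pooled mean `Ȳ_{i₁,t}` of the top block, and for
`i < i₁` we recurse on the data range `[1, i₁ - 1]`.  A fuel of `t` suffices since the
range shrinks strictly at each step. -/
def sdmmsaAux (n Y : ℕ → ℝ) : ℕ → ℕ → ℕ → ℝ
  | 0, _, _ => 0
  | fuel + 1, t, i =>
      if firstIdx n Y t ≤ i then pooledMean n Y (firstIdx n Y t) t
      else sdmmsaAux n Y fuel (firstIdx n Y t - 1) i

/-- `muhat n Y k i` is the SDMMSA estimate `μ̂_i` computed from the data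
`(Y_1,n_1),…,(Y_k,n_k)`. -/
def muhat (n Y : ℕ → ℝ) (k i : ℕ) : ℝ := sdmmsaAux n Y k k i

/-- The SDMMSA indices `i_u` computed from the data `(Y_1,n_1),…,(Y_k,n_k)`:
`sdIdx n Y k 0 = i_0 = k+1` and `i_{u+1}` is the first SDMMSA index of `[1, i_u - 1]`. -/
def sdIdx (n Y : ℕ → ℝ) (k : ℕ) : ℕ → ℕ
  | 0 => k + 1
  | u + 1 => firstIdx n Y (sdIdx n Y k u - 1)

/-- The number of steps `h` of the SDMMSA: the first `u` with `i_u = 1`. -/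
def sdSteps (n Y : ℕ → ℝ) (k : ℕ) : ℕ := sInf {u | sdIdx n Y k u = 1}

end SDMMSA

section Aux

private lemma icc_split (f : ℕ → ℝ) {i j l : ℕ} (h1 : i ≤ j + 1) (h2 : j ≤ l) :
    ∑ h ∈ Finset.Icc i l, f h = ∑ h ∈ Finset.Icc i j, f h + ∑ h ∈ Finset.Icc (j+1) l, f h := by
  rw [← Finset.sum_union]
  · apply Finset.sum_congr _ (fun _ _ => rfl)
    ext x
    simp only [Finset.mem_union, Finset.mem_Icc]
    omega
  · rw [Finset.disjoint_left]
    intro x hx hx'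
    simp only [Finset.mem_Icc] at hx hx'
    omega

private lemma pw_pos {n : ℕ → ℝ} {i j t : ℕ} (hn : ∀ h, 1 ≤ h → h ≤ t → 0 < n h)
    (hi : 1 ≤ i) (hij : i ≤ j) (hjt : j ≤ t) : 0 < pooledWeight n i j := by
  apply Finset.sum_pos
  · intro h hh
    simp only [Finset.mem_Icc] at hh
    exact hn h (le_trans hi hh.1) (le_trans hh.2 hjt)
  · exact ⟨i, by simp [hij]⟩

private lemma pw_mul_pm {n Y : ℕ → ℝ} {i j : ℕ} (hW : pooledWeight n i j ≠ 0) :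
    pooledWeight n i j * pooledMean n Y i j = ∑ h ∈ Finset.Icc i j, n h * Y h := by
  rw [pooledMean, mul_div_cancel₀ _ hW]

/-- `∑_{h=j}^t n_h (Y_h - c) = W_{j,t} (Ȳ_{j,t} - c)`. -/
private lemma tail_sum_eq {n Y : ℕ → ℝ} {j t : ℕ} (c : ℝ) (hW : pooledWeight n j t ≠ 0) :
    ∑ h ∈ Finset.Icc j t, n h * (Y h - c)
      = pooledWeight n j t * (pooledMean n Y j t - c) := by
  rw [mul_sub, pw_mul_pm hW, pooledWeight, Finset.sum_mul]
  simp only [mul_sub]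
  rw [Finset.sum_sub_distrib]

private lemma firstIdx_spec (n Y : ℕ → ℝ) {t : ℕ} (ht : 1 ≤ t) :
    1 ≤ firstIdx n Y t ∧ firstIdx n Y t ≤ t ∧
      ∀ j', 1 ≤ j' → j' ≤ t → pooledMean n Y j' t ≤ pooledMean n Y (firstIdx n Y t) t := by
  have hne : {j | 1 ≤ j ∧ j ≤ t ∧ ∀ j', 1 ≤ j' → j' ≤ t →
      pooledMean n Y j' t ≤ pooledMean n Y j t}.Nonempty := by
    obtain ⟨b, hb, hmax⟩ := Finset.exists_max_image (Finset.Icc 1 t)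
      (fun j => pooledMean n Y j t) ⟨1, by simp [ht]⟩
    simp only [Finset.mem_Icc] at hb
    exact ⟨b, hb.1, hb.2, fun j' h1 h2 => hmax j' (Finset.mem_Icc.mpr ⟨h1, h2⟩)⟩
  exact Nat.sInf_mem hne

/-- Abel-type inequality: if all tail sums of `w` on `[a, a+L]` are `≤ 0` and `μ` is
isotone on `[a, a+L]`, then `∑ w μ ≤ (∑ w) μ_a`. -/
private lemma abel_ineq (w μ : ℕ → ℝ) :
    ∀ L a, (∀ j, a ≤ j → j ≤ a + L → ∑ h ∈ Finset.Icc j (a+L), w h ≤ 0) →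
    (∀ i i', a ≤ i → i ≤ i' → i' ≤ a + L → μ i ≤ μ i') →
    ∑ h ∈ Finset.Icc a (a+L), w h * μ h ≤ (∑ h ∈ Finset.Icc a (a+L), w h) * μ a := by
  intro L
  induction L with
  | zero => intro a _ _; simp
  | succ L ih =>
    intro a hT hμ
    have h1 : ∑ h ∈ Finset.Icc a (a+(L+1)), w h * μ h
        = w a * μ a + ∑ h ∈ Finset.Icc (a+1) (a+(L+1)), w h * μ h := by
      rw [icc_split (fun h => w h * μ h) (by omega : a ≤ a + 1) (by omega)]
      simp
    have h2 : ∑ h ∈ Finset.Icc a (a+(L+1)), w h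
        = w a + ∑ h ∈ Finset.Icc (a+1) (a+(L+1)), w h := by
      rw [icc_split w (by omega : a ≤ a + 1) (by omega)]
      simp
    have hrange : a + 1 + L = a + (L + 1) := by omega
    have ihs := ih (a+1) (by intro j hj hj'; rw [hrange]; exact hT j (by omega) (by omega))
      (by intro i i' h1' h2' h3'; exact hμ i i' (by omega) h2' (by omega))
    rw [hrange] at ihs
    have hT1 : ∑ h ∈ Finset.Icc (a+1) (a+(L+1)), w h ≤ 0 := hT (a+1) (by omega) (by omega)
    have hμ1 : μ a ≤ μ (a+1) := hμ a (a+1) le_rfl (by omega) (by omega)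
    have : (∑ h ∈ Finset.Icc (a+1) (a+(L+1)), w h) * μ (a+1)
        ≤ (∑ h ∈ Finset.Icc (a+1) (a+(L+1)), w h) * μ a :=
      mul_le_mul_of_nonpos_left hμ1 hT1
    rw [h1, h2]
    nlinarith [ihs]

/-- Block inequality: with `a = firstIdx n Y t` and `c = Ȳ_{a,t}`,
`∑_{i=a}^t n_i (Y_i - c)(μ_i - c) ≤ 0` for any `μ` isotone on `[a,t]`. -/
private lemma block_ineq {n Y : ℕ → ℝ} {t : ℕ} (ht : 1 ≤ t)
    (hn : ∀ h, 1 ≤ h → h ≤ t → 0 < n h) (μ : ℕ → ℝ)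
    (hμ : ∀ i i', firstIdx n Y t ≤ i → i ≤ i' → i' ≤ t → μ i ≤ μ i') :
    ∑ i ∈ Finset.Icc (firstIdx n Y t) t,
      n i * (Y i - pooledMean n Y (firstIdx n Y t) t) * (μ i - pooledMean n Y (firstIdx n Y t) t)
      ≤ 0 := by
  obtain ⟨ha1, hat, hmax⟩ := firstIdx_spec n Y ht
  set a := firstIdx n Y t with hadef
  set c := pooledMean n Y a t with hcdef
  set w : ℕ → ℝ := fun h => n h * (Y h - c) with hwdef
  have hTle : ∀ j, 1 ≤ j → j ≤ t → ∑ h ∈ Finset.Icc j t, w h ≤ 0 := by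
    intro j hj1 hjt
    have hWpos := pw_pos hn hj1 hjt le_rfl
    rw [show (∑ h ∈ Finset.Icc j t, w h) = ∑ h ∈ Finset.Icc j t, n h * (Y h - c) from rfl,
      tail_sum_eq c (ne_of_gt hWpos)]
    have := hmax j hj1 hjt
    nlinarith
  have hTa : ∑ h ∈ Finset.Icc a t, w h = 0 := by
    have hWpos := pw_pos hn ha1 hat le_rfl
    rw [show (∑ h ∈ Finset.Icc a t, w h) = ∑ h ∈ Finset.Icc a t, n h * (Y h - c) from rfl,
      tail_sum_eq c (ne_of_gt hWpos)]
    simp [hcdef]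
  have key := abel_ineq w (fun i => μ i - c) (t - a) a
    (by intro j hj hj'; rw [show a + (t - a) = t by omega]; exact hTle j (by omega) (by omega))
    (fun i i' h1 h2 h3 => sub_le_sub_right (hμ i i' h1 h2 (by omega)) c)
  rw [show a + (t - a) = t by omega] at key
  calc ∑ i ∈ Finset.Icc a t, n i * (Y i - c) * (μ i - c)
      = ∑ i ∈ Finset.Icc a t, w i * (μ i - c) := by apply Finset.sum_congr rfl; intros; rfl
    _ ≤ (∑ h ∈ Finset.Icc a t, w h) * (μ a - c) := key
    _ = 0 := by rw [hTa, zero_mul]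

/-- Main induction on fuel. -/
private lemma sdmmsa_main (n Y : ℕ → ℝ) :
    ∀ f t, 1 ≤ t → t ≤ f → (∀ h, 1 ≤ h → h ≤ t → 0 < n h) →
    (∀ i i', 1 ≤ i → i ≤ i' → i' ≤ t → sdmmsaAux n Y f t i ≤ sdmmsaAux n Y f t i') ∧
    (∀ μ : ℕ → ℝ, (∀ i i', 1 ≤ i → i ≤ i' → i' ≤ t → μ i ≤ μ i') →
      ∑ i ∈ Finset.Icc 1 t, n i * (Y i - sdmmsaAux n Y f t i) * (μ i - sdmmsaAux n Y f t i) ≤ 0) := by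
  intro f
  induction f with
  | zero => intro t ht hf; omega
  | succ f ih =>
    intro t ht htf hn
    obtain ⟨ha1, hat, hmax⟩ := firstIdx_spec n Y ht
    set a := firstIdx n Y t with hadef
    set c := pooledMean n Y a t with hcdef
    have hg_hi : ∀ i, a ≤ i → sdmmsaAux n Y (f+1) t i = c := by
      intro i hi
      simp only [sdmmsaAux, ← hadef, if_pos hi, ← hcdef]
    have hg_lo : ∀ i, i < a → sdmmsaAux n Y (f+1) t i = sdmmsaAux n Y f (a-1) i := by
      intro i hi
      simp only [sdmmsaAux, ← hadef, if_neg (by omega : ¬ a ≤ i)]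
    by_cases hcase : a = 1
    · -- single block
      have hg : ∀ i, 1 ≤ i → sdmmsaAux n Y (f+1) t i = c := fun i hi => hg_hi i (by omega)
      constructor
      · intro i i' hi hii' hit
        rw [hg i hi, hg i' (by omega)]
      · intro μ hμ
        calc ∑ i ∈ Finset.Icc 1 t, n i * (Y i - sdmmsaAux n Y (f+1) t i) * (μ i - sdmmsaAux n Y (f+1) t i)
            = ∑ i ∈ Finset.Icc a t, n i * (Y i - c) * (μ i - c) := by
              rw [hcase]
              apply Finset.sum_congr rfl
              intro i hi
              simp only [Finset.mem_Icc] at hi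
              rw [hg i hi.1]
          _ ≤ 0 := block_ineq ht hn μ (fun i i' h1 h2 h3 => hμ i i' (by omega) h2 h3)
    · -- a ≥ 2 : recurse on [1, a-1]
      have ha2 : 2 ≤ a := by omega
      have hsub := ih (a-1) (by omega) (by omega)
        (fun h h1 h2 => hn h h1 (by omega))
      -- the top value of the sub-estimator
      obtain ⟨f', rfl⟩ : ∃ f', f = f' + 1 := ⟨f - 1, by omega⟩
      obtain ⟨ha1', hat', hmax'⟩ := firstIdx_spec n Y (show 1 ≤ a - 1 by omega)
      set a' := firstIdx n Y (a-1) with ha'def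
      have hgsub_top : sdmmsaAux n Y (f'+1) (a-1) (a-1) = pooledMean n Y a' (a-1) := by
        simp only [sdmmsaAux, ← ha'def, if_pos hat']
      -- pooledMean a' (a-1) ≤ c  (averaging argument)
      have havg : pooledMean n Y a' (a-1) ≤ c := by
        have hW1 : 0 < pooledWeight n a' (a-1) := pw_pos hn ha1' hat' (by omega)
        have hW2 : 0 < pooledWeight n a t := pw_pos hn ha1 hat le_rfl
        have hWt : 0 < pooledWeight n a' t := pw_pos hn ha1' (by omega) le_rfl
        have hsplitW : pooledWeight n a' t = pooledWeight n a' (a-1) + pooledWeight n a t := by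
          rw [pooledWeight, pooledWeight, pooledWeight,
            icc_split n (j := a-1) (by omega) (by omega), show a - 1 + 1 = a by omega]
        have hsplitN : pooledWeight n a' t * pooledMean n Y a' t
            = pooledWeight n a' (a-1) * pooledMean n Y a' (a-1)
              + pooledWeight n a t * c := by
          rw [pw_mul_pm (ne_of_gt hWt), pw_mul_pm (ne_of_gt hW1), hcdef, pw_mul_pm (ne_of_gt hW2),
            icc_split (fun h => n h * Y h) (j := a-1) (by omega) (by omega), show a - 1 + 1 = a by omega]
        have hle : pooledMean n Y a' t ≤ c := hmax a' ha1' (by omega)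
        have h4 := mul_le_mul_of_nonneg_left hle hWt.le
        rw [hsplitN, hsplitW] at h4
        have h5 : pooledWeight n a' (a-1) * pooledMean n Y a' (a-1)
            ≤ pooledWeight n a' (a-1) * c := by nlinarith [h4]
        exact le_of_mul_le_mul_left h5 hW1
      constructor
      · intro i i' hi hii' hit
        by_cases h1 : a ≤ i
        · rw [hg_hi i h1, hg_hi i' (by omega)]
        · push_neg at h1
          by_cases h2 : a ≤ i'
          · rw [hg_lo i h1, hg_hi i' h2]
            calc sdmmsaAux n Y (f'+1) (a-1) i
                ≤ sdmmsaAux n Y (f'+1) (a-1) (a-1) := hsub.1 i (a-1) hi (by omega) le_rfl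
              _ = pooledMean n Y a' (a-1) := hgsub_top
              _ ≤ c := havg
          · push_neg at h2
            rw [hg_lo i h1, hg_lo i' h2]
            exact hsub.1 i i' hi hii' (by omega)
      · intro μ hμ
        have hsplit : ∑ i ∈ Finset.Icc 1 t,
              n i * (Y i - sdmmsaAux n Y (f'+1+1) t i) * (μ i - sdmmsaAux n Y (f'+1+1) t i)
            = (∑ i ∈ Finset.Icc 1 (a-1),
                n i * (Y i - sdmmsaAux n Y (f'+1+1) t i) * (μ i - sdmmsaAux n Y (f'+1+1) t i))
              + ∑ i ∈ Finset.Icc a t,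
                n i * (Y i - sdmmsaAux n Y (f'+1+1) t i) * (μ i - sdmmsaAux n Y (f'+1+1) t i) := by
          rw [icc_split _ (by omega) (by omega : a - 1 ≤ t), show a - 1 + 1 = a by omega]
        rw [hsplit]
        have hlow : (∑ i ∈ Finset.Icc 1 (a-1),
              n i * (Y i - sdmmsaAux n Y (f'+1+1) t i) * (μ i - sdmmsaAux n Y (f'+1+1) t i)) ≤ 0 := by
          calc (∑ i ∈ Finset.Icc 1 (a-1),
                n i * (Y i - sdmmsaAux n Y (f'+1+1) t i) * (μ i - sdmmsaAux n Y (f'+1+1) t i))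
              = ∑ i ∈ Finset.Icc 1 (a-1),
                n i * (Y i - sdmmsaAux n Y (f'+1) (a-1) i) * (μ i - sdmmsaAux n Y (f'+1) (a-1) i) := by
                apply Finset.sum_congr rfl
                intro i hi
                simp only [Finset.mem_Icc] at hi
                rw [hg_lo i (by omega)]
            _ ≤ 0 := hsub.2 μ (fun i i' h1 h2 h3 => hμ i i' h1 h2 (by omega))
        have hhigh : (∑ i ∈ Finset.Icc a t,
              n i * (Y i - sdmmsaAux n Y (f'+1+1) t i) * (μ i - sdmmsaAux n Y (f'+1+1) t i)) ≤ 0 := by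
          calc (∑ i ∈ Finset.Icc a t,
                n i * (Y i - sdmmsaAux n Y (f'+1+1) t i) * (μ i - sdmmsaAux n Y (f'+1+1) t i))
              = ∑ i ∈ Finset.Icc a t, n i * (Y i - c) * (μ i - c) := by
                apply Finset.sum_congr rfl
                intro i hi
                simp only [Finset.mem_Icc] at hi
                rw [hg_hi i hi.1]
            _ ≤ 0 := block_ineq ht hn μ (fun i i' h1 h2 h3 => hμ i i' (by omega) h2 h3)
        linarith

end Aux

/-- Theorem 1: the SDMMSA estimator `(μ̂_1,…,μ̂_k)` is the maximum likelihood
estimator under the monotone constraint: it belongs to the isotonic cone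
`{μ : μ_1 ≤ … ≤ μ_k}` and minimizes `f(μ) = ∑_{i=1}^k n_i (Ȳ_i - μ_i)²` over that cone. -/
theorem sdmmsa_is_isotonic_mle (k : ℕ) (hk : 1 ≤ k) (n Y : ℕ → ℝ)
    (hn : ∀ h, 1 ≤ h → h ≤ k → 0 < n h) :
    (∀ i i', 1 ≤ i → i ≤ i' → i' ≤ k → muhat n Y k i ≤ muhat n Y k i') ∧
    (∀ μ : ℕ → ℝ, (∀ i i', 1 ≤ i → i ≤ i' → i' ≤ k → μ i ≤ μ i') →
      ∑ i ∈ Finset.Icc 1 k, n i * (Y i - muhat n Y k i) ^ 2 ≤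
        ∑ i ∈ Finset.Icc 1 k, n i * (Y i - μ i) ^ 2) := by
  obtain ⟨hiso, hmin⟩ := sdmmsa_main n Y k k hk le_rfl hn
  refine ⟨hiso, ?_⟩
  intro μ hμ
  have key := hmin μ hμ
  set g : ℕ → ℝ := fun i => muhat n Y k i with hg
  have hexp : ∀ i ∈ Finset.Icc 1 k,
      n i * (Y i - μ i) ^ 2
        = n i * (Y i - g i) ^ 2 + n i * (μ i - g i) ^ 2
          - 2 * (n i * (Y i - g i) * (μ i - g i)) := by
    intro i _
    ring
  rw [Finset.sum_congr rfl hexp]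
  have hnn : (0:ℝ) ≤ ∑ i ∈ Finset.Icc 1 k, n i * (μ i - g i) ^ 2 := by
    apply Finset.sum_nonneg
    intro i hi
    simp only [Finset.mem_Icc] at hi
    exact mul_nonneg (le_of_lt (hn i hi.1 hi.2)) (sq_nonneg _)
  have hkey : ∑ i ∈ Finset.Icc 1 k, n i * (Y i - g i) * (μ i - g i) ≤ 0 := key
  rw [Finset.sum_sub_distrib, Finset.sum_add_distrib, ← Finset.mul_sum]
  linarith
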